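/- arXiv:1701.08012 — 2 statements merged into one kernel-verified Lean document; each statement's English description precedes it below -/
import Mathlib

section
/- Let β ∈ (0, 1/2) and let h : [0,1]² → [0,∞) be measurable. Then there exists a constant C = C(β) such that ∫₀¹∫₀¹∫₀¹ |y−x|^{β−1} |z−x|^{β−1} h(y,z) dx dy dz ≤ C ∫₀¹∫₀¹ |y−z|^{2β−1} h(y,z) dy dz. -/
open MeasureTheory Set
open scoped ENNReal

lemma lint_scale (f : ℝ → ℝ≥0∞) (hf : Measurable f) {c : ℝ} (hc : c ≠ 0) :
    ∫⁻ x, f x = ENNReal.ofReal |c| * ∫⁻ u, f (c * u) := by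
  have h1 : ∫⁻ u, f (c * u) = ∫⁻ x, f x ∂(Measure.map (c * ·) volume) :=
    (lintegral_map hf (measurable_const_mul c)).symm
  rw [h1, Real.map_volume_mul_left hc, lintegral_smul_measure, smul_eq_mul, ← mul_assoc,
    ← ENNReal.ofReal_mul (abs_nonneg _), ← abs_mul, mul_inv_cancel₀ hc]
  simp

lemma subst_lemma (β y z : ℝ) (hyz : y ≠ z) :
    ∫⁻ x : ℝ, ENNReal.ofReal (|y - x| ^ (β - 1)) * ENNReal.ofReal (|z - x| ^ (β - 1))
      = ENNReal.ofReal (|y - z| ^ (2 * β - 1)) *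
        ∫⁻ u : ℝ, ENNReal.ofReal (|1 - u| ^ (β - 1)) * ENNReal.ofReal (|u| ^ (β - 1)) := by
  set c := y - z with hc_def
  have hc : c ≠ 0 := sub_ne_zero.mpr hyz
  have hcpos : (0:ℝ) < |c| := abs_pos.mpr hc
  set f : ℝ → ℝ≥0∞ := fun x => ENNReal.ofReal (|y - x| ^ (β - 1)) * ENNReal.ofReal (|z - x| ^ (β - 1)) with hf_def
  have hf : Measurable f := by fun_prop
  have step1 : ∫⁻ x, f x = ∫⁻ x, f (z + x) := (lintegral_add_left_eq_self f z).symm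
  have step2 : ∫⁻ x, f (z + x) = ENNReal.ofReal |c| * ∫⁻ u, f (z + c * u) :=
    lint_scale (fun x => f (z + x)) (hf.comp (measurable_const_add z)) hc
  have step3 : ∀ u : ℝ, f (z + c * u) =
      ENNReal.ofReal (|c| ^ (2 * (β - 1))) *
        (ENNReal.ofReal (|1 - u| ^ (β - 1)) * ENNReal.ofReal (|u| ^ (β - 1))) := by
    intro u
    have e1 : y - (z + c * u) = c * (1 - u) := by rw [hc_def]; ring
    have e2 : z - (z + c * u) = c * (-u) := by ring
    rw [hf_def]
    simp only [e1, e2, abs_mul, abs_neg]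
    rw [Real.mul_rpow (abs_nonneg _) (abs_nonneg _),
        Real.mul_rpow (abs_nonneg _) (abs_nonneg _),
        ENNReal.ofReal_mul (Real.rpow_nonneg (abs_nonneg _) _),
        ENNReal.ofReal_mul (Real.rpow_nonneg (abs_nonneg _) _)]
    rw [show (2:ℝ) * (β - 1) = (β - 1) + (β - 1) by ring,
        Real.rpow_add hcpos,
        ENNReal.ofReal_mul (Real.rpow_nonneg (abs_nonneg _) _)]
    ring
  rw [step1, step2]
  simp only [step3]
  rw [lintegral_const_mul _ (by fun_prop), ← mul_assoc,
      ← ENNReal.ofReal_mul (abs_nonneg _)]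
  congr 2
  nth_rewrite 1 [← Real.rpow_one |c|]
  rw [← Real.rpow_add hcpos]
  ring_nf

lemma finite_I (β : ℝ) (hβ : β ∈ Set.Ioo (0:ℝ) (1/2)) :
    ∫⁻ u : ℝ, ENNReal.ofReal (|1 - u| ^ (β - 1)) * ENNReal.ofReal (|u| ^ (β - 1)) < ∞ := by
  obtain ⟨hβ0, hβh⟩ := hβ
  set p := β - 1 with hp_def
  have hp1 : -1 < p := by simp only [hp_def]; linarith
  have hp0 : p ≤ 0 := by simp only [hp_def]; linarith
  have h2p : 2 * p < -1 := by simp only [hp_def]; linarith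
  set g : ℝ → ℝ≥0∞ := fun u => ENNReal.ofReal (|1 - u| ^ p) * ENNReal.ofReal (|u| ^ p) with hg_def
  -- master fact: lintegral of |u|^p over any Icc is finite
  have K0 : ∀ M : ℝ, 0 ≤ M → ∫⁻ u in Icc 0 M, ENNReal.ofReal (|u| ^ p) < ∞ := by
    intro M hM
    have h1 : ∫⁻ u in Icc 0 M, ENNReal.ofReal (|u| ^ p)
        = ∫⁻ u in Icc 0 M, ENNReal.ofReal (u ^ p) := by
      refine setLIntegral_congr_fun measurableSet_Icc ?_
      intro u hu
      simp only [abs_of_nonneg hu.1]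
    rw [h1, ← setLIntegral_congr (Ioc_ae_eq_Icc (μ := volume) (a := (0:ℝ)) (b := M))]
    have h2 : IntegrableOn (fun u : ℝ => u ^ p) (Ioc 0 M) := by
      have := intervalIntegral.intervalIntegrable_rpow' (a := 0) (b := M) hp1
      rwa [intervalIntegrable_iff, uIoc_of_le hM] at this
    exact h2.setLIntegral_lt_top
  have Kneg : ∀ M : ℝ, 0 ≤ M → ∫⁻ u in Icc (-M) 0, ENNReal.ofReal (|u| ^ p) < ∞ := by
    intro M hM
    have hpre : (Neg.neg : ℝ → ℝ) ⁻¹' (Icc 0 M) = Icc (-M) 0 := by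
      ext u; simp only [mem_preimage, mem_Icc]
      constructor <;> intro h <;> constructor <;> linarith [h.1, h.2]
    have := (Measure.measurePreserving_neg (volume : Measure ℝ)).setLIntegral_comp_preimage
      (measurableSet_Icc (a := (0:ℝ)) (b := M))
      (f := fun v => ENNReal.ofReal (|v| ^ p)) (by fun_prop)
    rw [hpre] at this
    simp only [abs_neg] at this
    rw [this]
    exact K0 M hM
  have K : ∀ a b : ℝ, ∫⁻ u in Icc a b, ENNReal.ofReal (|u| ^ p) < ∞ := by
    intro a b
    set M := |a| + |b| with hM_def
    have hM : 0 ≤ M := by positivity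
    have hsub : Icc a b ⊆ Icc (-M) 0 ∪ Icc 0 M := by
      intro u hu
      rcases le_total u 0 with h | h
      · left; exact ⟨by cases abs_cases a <;> cases abs_cases b <;> · simp [hM_def]; linarith [hu.1], h⟩
      · right; exact ⟨h, by cases abs_cases a <;> cases abs_cases b <;> · simp [hM_def]; linarith [hu.2]⟩
    calc ∫⁻ u in Icc a b, ENNReal.ofReal (|u| ^ p)
        ≤ ∫⁻ u in Icc (-M) 0 ∪ Icc 0 M, ENNReal.ofReal (|u| ^ p) := lintegral_mono_set hsub
      _ ≤ (∫⁻ u in Icc (-M) 0, ENNReal.ofReal (|u| ^ p))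
          + ∫⁻ u in Icc 0 M, ENNReal.ofReal (|u| ^ p) := lintegral_union_le _ _ _
      _ < ∞ := ENNReal.add_lt_top.mpr ⟨Kneg M hM, K0 M hM⟩
  -- cover ℝ
  have cover : (univ : Set ℝ) ⊆ Iio (-1) ∪ (Icc (-1) (1/2) ∪ (Icc (1/2) 2 ∪ Ioi 2)) := by
    intro u _
    rcases lt_or_ge u (-1) with h | h
    · exact Or.inl h
    rcases le_total u (1/2) with h2 | h2
    · exact Or.inr (Or.inl ⟨h, h2⟩)
    rcases le_total u 2 with h3 | h3
    · exact Or.inr (Or.inr (Or.inl ⟨h2, h3⟩))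
    rcases eq_or_lt_of_le h3 with h4 | h4
    · exact Or.inr (Or.inr (Or.inl ⟨by linarith, le_of_eq h4.symm⟩))
    · exact Or.inr (Or.inr (Or.inr h4))
  -- piece A : Iio (-1)
  have hA : ∫⁻ u in Iio (-1 : ℝ), g u < ∞ := by
    have hb : ∀ u ∈ Iio (-1 : ℝ), g u ≤ ENNReal.ofReal ((-u) ^ (2 * p)) := by
      intro u hu
      have hu1 : u < -1 := hu
      have h1u : (0:ℝ) < -u := by linarith
      have e1 : |1 - u| = 1 - u := abs_of_pos (by linarith)
      have e2 : |u| = -u := abs_of_neg (by linarith)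
      rw [hg_def]
      simp only [e1, e2]
      have h3 : (1 - u) ^ p ≤ (-u) ^ p :=
        Real.rpow_le_rpow_of_nonpos h1u (by linarith) hp0
      calc ENNReal.ofReal ((1 - u) ^ p) * ENNReal.ofReal ((-u) ^ p)
          ≤ ENNReal.ofReal ((-u) ^ p) * ENNReal.ofReal ((-u) ^ p) :=
            mul_le_mul_left (ENNReal.ofReal_le_ofReal h3) _
        _ = ENNReal.ofReal ((-u) ^ p * (-u) ^ p) :=
            (ENNReal.ofReal_mul (Real.rpow_nonneg h1u.le _)).symm
        _ = ENNReal.ofReal ((-u) ^ (2 * p)) := by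
            rw [← Real.rpow_add h1u, two_mul]
    refine lt_of_le_of_lt (setLIntegral_mono (μ := volume) (s := Iio (-1))
      (g := fun u => ENNReal.ofReal ((-u) ^ (2*p))) (by fun_prop) hb) ?_
    have hpre : (Neg.neg : ℝ → ℝ) ⁻¹' (Ioi 1) = Iio (-1) := by
      ext u; simp [lt_neg]
    have := (Measure.measurePreserving_neg (volume : Measure ℝ)).setLIntegral_comp_preimage
      (measurableSet_Ioi (a := (1:ℝ)))
      (f := fun v => ENNReal.ofReal (v ^ (2*p))) (by fun_prop)
    rw [hpre] at this
    rw [show (fun u : ℝ => ENNReal.ofReal ((-u) ^ (2*p))) = fun u : ℝ => ENNReal.ofReal ((-u) ^ (2*p)) from rfl]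
    rw [this]
    exact (integrableOn_Ioi_rpow_of_lt h2p one_pos).setLIntegral_lt_top
  -- piece B : Icc (-1) (1/2)
  have hB : ∫⁻ u in Icc (-1 : ℝ) (1/2), g u < ∞ := by
    have hb : ∀ u ∈ Icc (-1 : ℝ) (1/2), g u ≤
        ENNReal.ofReal ((1/2 : ℝ) ^ p) * ENNReal.ofReal (|u| ^ p) := by
      intro u hu
      have h1 : (1:ℝ)/2 ≤ 1 - u := by linarith [hu.2]
      have h3 : (1 - u) ^ p ≤ (1/2 : ℝ) ^ p :=
        Real.rpow_le_rpow_of_nonpos (by norm_num) h1 hp0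
      have e1 : |1 - u| = 1 - u := abs_of_pos (by linarith [hu.2])
      rw [hg_def]; simp only [e1]
      exact mul_le_mul_left (ENNReal.ofReal_le_ofReal h3) _
    refine lt_of_le_of_lt (setLIntegral_mono (by fun_prop) hb) ?_
    rw [lintegral_const_mul _ (by fun_prop)]
    exact ENNReal.mul_lt_top ENNReal.ofReal_lt_top (K (-1) (1/2))
  -- piece C : Icc (1/2) 2
  have hC : ∫⁻ u in Icc (1/2 : ℝ) 2, g u < ∞ := by
    have hb : ∀ u ∈ Icc (1/2 : ℝ) 2, g u ≤
        ENNReal.ofReal ((1/2 : ℝ) ^ p) * ENNReal.ofReal (|1 - u| ^ p) := by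
      intro u hu
      have h3 : |u| ^ p ≤ (1/2 : ℝ) ^ p := by
        rw [abs_of_pos (by linarith [hu.1] : (0:ℝ) < u)]
        exact Real.rpow_le_rpow_of_nonpos (by norm_num) hu.1 hp0
      rw [hg_def, mul_comm (ENNReal.ofReal ((1/2 : ℝ) ^ p)) _]
      exact mul_le_mul_right (ENNReal.ofReal_le_ofReal h3) _
    refine lt_of_le_of_lt (setLIntegral_mono (by fun_prop) hb) ?_
    rw [lintegral_const_mul _ (by fun_prop)]
    refine ENNReal.mul_lt_top ENNReal.ofReal_lt_top ?_
    have hpre : (fun u : ℝ => 1 - u) ⁻¹' (Icc (-1) (1/2)) = Icc (1/2) 2 := by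
      ext u; simp only [mem_preimage, mem_Icc]; constructor <;> intro h <;> constructor <;> linarith [h.1, h.2]
    have := (Measure.measurePreserving_sub_left (volume : Measure ℝ) 1).setLIntegral_comp_preimage
      (measurableSet_Icc (a := (-1:ℝ)) (b := 1/2))
      (f := fun v => ENNReal.ofReal (|v| ^ p)) (by fun_prop)
    rw [hpre] at this
    rw [this]
    exact K (-1) (1/2)
  -- piece D : Ioi 2
  have hD : ∫⁻ u in Ioi (2 : ℝ), g u < ∞ := by
    have hb : ∀ u ∈ Ioi (2 : ℝ), g u ≤
        ENNReal.ofReal ((1/2 : ℝ) ^ p) * ENNReal.ofReal (u ^ (2 * p)) := by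
      intro u hu
      have hu2 : (2:ℝ) < u := hu
      have hupos : (0:ℝ) < u := by linarith
      have e1 : |1 - u| = u - 1 := by rw [abs_of_neg (by linarith)]; ring
      have e2 : |u| = u := abs_of_pos hupos
      have h3 : (u - 1) ^ p ≤ (1/2 : ℝ) ^ p * u ^ p := by
        have : ((1:ℝ)/2 * u) ≤ u - 1 := by linarith
        calc (u - 1) ^ p ≤ ((1:ℝ)/2 * u) ^ p :=
              Real.rpow_le_rpow_of_nonpos (by linarith) this hp0
          _ = (1/2 : ℝ) ^ p * u ^ p := Real.mul_rpow (by norm_num) hupos.le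
      rw [hg_def]; simp only [e1, e2]
      calc ENNReal.ofReal ((u - 1) ^ p) * ENNReal.ofReal (u ^ p)
          ≤ ENNReal.ofReal ((1/2 : ℝ) ^ p * u ^ p) * ENNReal.ofReal (u ^ p) :=
            mul_le_mul_left (ENNReal.ofReal_le_ofReal h3) _
        _ = ENNReal.ofReal ((1/2 : ℝ) ^ p) * (ENNReal.ofReal (u ^ p) * ENNReal.ofReal (u ^ p)) := by
            rw [ENNReal.ofReal_mul (Real.rpow_nonneg (by norm_num) _)]; ring
        _ = ENNReal.ofReal ((1/2 : ℝ) ^ p) * ENNReal.ofReal (u ^ (2 * p)) := by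
            rw [← ENNReal.ofReal_mul (Real.rpow_nonneg hupos.le _), ← Real.rpow_add hupos, two_mul]
    refine lt_of_le_of_lt (setLIntegral_mono (by fun_prop) hb) ?_
    rw [lintegral_const_mul _ (by fun_prop)]
    exact ENNReal.mul_lt_top ENNReal.ofReal_lt_top
      (integrableOn_Ioi_rpow_of_lt h2p two_pos).setLIntegral_lt_top
  calc ∫⁻ u : ℝ, g u = ∫⁻ u in (univ : Set ℝ), g u := (setLIntegral_univ g).symm
    _ ≤ ∫⁻ u in Iio (-1) ∪ (Icc (-1) (1/2) ∪ (Icc (1/2) 2 ∪ Ioi 2)), g u :=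
        lintegral_mono_set cover
    _ ≤ (∫⁻ u in Iio (-1 : ℝ), g u) + ∫⁻ u in Icc (-1 : ℝ) (1/2) ∪ (Icc (1/2) 2 ∪ Ioi 2), g u :=
        lintegral_union_le _ _ _
    _ ≤ (∫⁻ u in Iio (-1 : ℝ), g u) + ((∫⁻ u in Icc (-1 : ℝ) (1/2), g u)
        + ((∫⁻ u in Icc (1/2 : ℝ) 2, g u) + ∫⁻ u in Ioi (2:ℝ), g u)) := by
        gcongr
        refine le_trans (lintegral_union_le _ _ _) ?_
        gcongr
        exact lintegral_union_le _ _ _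
    _ < ∞ := by
        refine ENNReal.add_lt_top.mpr ⟨hA, ENNReal.add_lt_top.mpr ⟨hB, ENNReal.add_lt_top.mpr ⟨hC, hD⟩⟩⟩

/-- For `β ∈ (0,1/2)` and measurable `h : [0,1]² → [0,∞]`, the triple integral of
`|y−x|^{β−1}|z−x|^{β−1} h(y,z)` is bounded by `C` times the double integral of
`|y−z|^{2β−1} h(y,z)`. -/
theorem stmt_3 (β : ℝ) (hβ : β ∈ Set.Ioo (0:ℝ) (1/2)) :
    ∃ C > 0, ∀ h : ℝ → ℝ → ℝ≥0∞, Measurable (Function.uncurry h) →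
      (∫⁻ y in Set.Ioo (0:ℝ) 1, ∫⁻ z in Set.Ioo (0:ℝ) 1, ∫⁻ x in Set.Ioo (0:ℝ) 1,
          ENNReal.ofReal (|y - x| ^ (β - 1)) * ENNReal.ofReal (|z - x| ^ (β - 1)) * h y z)
        ≤ ENNReal.ofReal C *
          ∫⁻ y in Set.Ioo (0:ℝ) 1, ∫⁻ z in Set.Ioo (0:ℝ) 1,
            ENNReal.ofReal (|y - z| ^ (2 * β - 1)) * h y z := by
  set I := ∫⁻ u : ℝ, ENNReal.ofReal (|1 - u| ^ (β - 1)) * ENNReal.ofReal (|u| ^ (β - 1)) with hI_def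
  have hIfin : I ≠ ⊤ := (finite_I β hβ).ne
  set C := I.toReal + 1 with hC_def
  have hIle : I ≤ ENNReal.ofReal C := by
    rw [← ENNReal.ofReal_toReal hIfin]
    exact ENNReal.ofReal_le_ofReal (by simp [hC_def])
  refine ⟨C, by positivity, ?_⟩
  intro h hh
  have key : ∀ y z : ℝ, z ≠ y →
      (∫⁻ x in Set.Ioo (0:ℝ) 1,
          ENNReal.ofReal (|y - x| ^ (β - 1)) * ENNReal.ofReal (|z - x| ^ (β - 1)) * h y z)
        ≤ ENNReal.ofReal C * (ENNReal.ofReal (|y - z| ^ (2 * β - 1)) * h y z) := by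
    intro y z hzy
    have hyz : y ≠ z := Ne.symm hzy
    calc (∫⁻ x in Set.Ioo (0:ℝ) 1,
          ENNReal.ofReal (|y - x| ^ (β - 1)) * ENNReal.ofReal (|z - x| ^ (β - 1)) * h y z)
        = (∫⁻ x in Set.Ioo (0:ℝ) 1,
            ENNReal.ofReal (|y - x| ^ (β - 1)) * ENNReal.ofReal (|z - x| ^ (β - 1))) * h y z :=
          lintegral_mul_const _ (by fun_prop)
      _ ≤ (∫⁻ x : ℝ,
            ENNReal.ofReal (|y - x| ^ (β - 1)) * ENNReal.ofReal (|z - x| ^ (β - 1))) * h y z :=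
          mul_le_mul_left (setLIntegral_le_lintegral _ _) _
      _ = (ENNReal.ofReal (|y - z| ^ (2 * β - 1)) * I) * h y z := by
          rw [subst_lemma β y z hyz]
      _ ≤ (ENNReal.ofReal (|y - z| ^ (2 * β - 1)) * ENNReal.ofReal C) * h y z :=
          mul_le_mul_left (mul_le_mul_right hIle _) _
      _ = ENNReal.ofReal C * (ENNReal.ofReal (|y - z| ^ (2 * β - 1)) * h y z) := by ring
  calc (∫⁻ y in Set.Ioo (0:ℝ) 1, ∫⁻ z in Set.Ioo (0:ℝ) 1, ∫⁻ x in Set.Ioo (0:ℝ) 1,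
          ENNReal.ofReal (|y - x| ^ (β - 1)) * ENNReal.ofReal (|z - x| ^ (β - 1)) * h y z)
      ≤ ∫⁻ y in Set.Ioo (0:ℝ) 1, ∫⁻ z in Set.Ioo (0:ℝ) 1,
          ENNReal.ofReal C * (ENNReal.ofReal (|y - z| ^ (2 * β - 1)) * h y z) := by
        refine lintegral_mono fun y => ?_
        refine lintegral_mono_ae ?_
        have hae : ∀ᵐ z ∂(volume.restrict (Set.Ioo (0:ℝ) 1)), z ≠ y := by
          refine ae_restrict_of_ae ?_
          rw [ae_iff]
          have : {z : ℝ | ¬ z ≠ y} = {y} := by ext z; simp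
          rw [this]
          exact Real.volume_singleton
        exact hae.mono fun z hz => key y z hz
    _ = ∫⁻ y in Set.Ioo (0:ℝ) 1, ENNReal.ofReal C *
          ∫⁻ z in Set.Ioo (0:ℝ) 1, ENNReal.ofReal (|y - z| ^ (2 * β - 1)) * h y z := by
        refine lintegral_congr fun y => ?_
        exact lintegral_const_mul' _ _ ENNReal.ofReal_ne_top
    _ = ENNReal.ofReal C * ∫⁻ y in Set.Ioo (0:ℝ) 1,
          ∫⁻ z in Set.Ioo (0:ℝ) 1, ENNReal.ofReal (|y - z| ^ (2 * β - 1)) * h y z :=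
        lintegral_const_mul' _ _ ENNReal.ofReal_ne_top
end

section
/- Let m ≥ 1 be an integer, H₀ ∈ (1 − 1/(2m), 1), and let L : (0,∞) → (0,∞) be slowly varying at infinity and bounded away from 0 and +∞ on every compact subset of (0,∞). Let (a_n)_{n≥m} be nonnegative reals with Σ_{n≥m} a_n < ∞, let ρ : (0,∞) → [−1,1] satisfy ρ(x)/(x^{2H₀−2}L(x)²) → c as x → +∞ for some c > 0, and set γ(x) = Σ_{n=m}^∞ a_n ρ(x)^n. Then there exist constants C > 0 and x₀ > 0 such that |γ(x)| ≤ C · L(x)^{2m} · x^{−2m(1−H₀)} for all x ≥ x₀. -/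
open Filter Topology

/-- Uniform bound on the autocovariance of the potential: under the same assumptions as the
asymptotics lemma, with `L` bounded away from `0` and `∞` on compacts, there are `C > 0` and
`x₀ > 0` with `|γ(x)| ≤ C L(x)^{2m} x^{−2m(1−H₀)}` for all `x ≥ x₀`. -/
theorem stmt_9 (m : ℕ) (hm : 1 ≤ m) (H₀ : ℝ) (hH₀ : H₀ ∈ Set.Ioo (1 - 1/(2*(m:ℝ))) 1)
    (L : ℝ → ℝ) (hLpos : ∀ x > 0, 0 < L x)
    (hSV : ∀ a > 0, Tendsto (fun u => L (a * u) / L u) atTop (𝓝 1))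
    (hB : ∀ K : Set ℝ, K ⊆ Set.Ioi 0 → IsCompact K →
      ∃ c c' : ℝ, 0 < c ∧ c ≤ c' ∧ ∀ u ∈ K, c ≤ L u ∧ L u ≤ c')
    (a : ℕ → ℝ) (ha : ∀ n, m ≤ n → 0 ≤ a n) (hsum : Summable (fun n => a (m + n)))
    (ρ : ℝ → ℝ) (hρr : ∀ x > 0, ρ x ∈ Set.Icc (-1:ℝ) 1)
    (c : ℝ) (hc : 0 < c)
    (hρ : Tendsto (fun x => ρ x / (x ^ (2*H₀ - 2) * L x ^ 2)) atTop (𝓝 c))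
    (γ : ℝ → ℝ) (hγ : ∀ x, γ x = ∑' n : ℕ, a (m + n) * ρ x ^ (m + n)) :
    ∃ C > 0, ∃ x₀ > 0, ∀ x ≥ x₀,
      |γ x| ≤ C * L x ^ (2*m) * x ^ (-(2*(m:ℝ)*(1-H₀))) := by
  set T : ℝ := ∑' n : ℕ, a (m + n) with hT
  have hT0 : 0 ≤ T := tsum_nonneg fun n => ha _ (Nat.le_add_right _ _)
  have hev : ∀ᶠ x in atTop, 0 < ρ x / (x ^ (2*H₀ - 2) * L x ^ 2) ∧
      ρ x / (x ^ (2*H₀ - 2) * L x ^ 2) ≤ c + 1 := by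
    filter_upwards [hρ.eventually_const_lt (show (0:ℝ) < c from hc),
      hρ.eventually_le_const (show c < c + 1 by linarith)] with x h1 h2
    exact ⟨h1, h2⟩
  obtain ⟨N, hN⟩ := eventually_atTop.1 hev
  refine ⟨(T + 1) * (c + 1) ^ m, by positivity, max N 1, lt_of_lt_of_le one_pos (le_max_right _ _), ?_⟩
  intro x hx
  have hx1 : (1:ℝ) ≤ x := le_trans (le_max_right _ _) hx
  have hx0 : (0:ℝ) < x := lt_of_lt_of_le one_pos hx1
  obtain ⟨hpos, hle⟩ := hN x (le_trans (le_max_left _ _) hx)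
  have hD : (0:ℝ) < x ^ (2*H₀ - 2) * L x ^ 2 := by
    have := hLpos x hx0
    positivity
  have hρ0 : 0 < ρ x := by
    have := mul_pos hpos hD
    rwa [div_mul_cancel₀] at this
    exact ne_of_gt hD
  have hρub : ρ x ≤ (c + 1) * (x ^ (2*H₀ - 2) * L x ^ 2) :=
    (div_le_iff₀ hD).1 hle
  have hρ1 : ρ x ≤ 1 := (hρr x hx0).2
  -- summability and bounds
  have hterm : ∀ n : ℕ, 0 ≤ a (m + n) * ρ x ^ (m + n) := fun n =>
    mul_nonneg (ha _ (Nat.le_add_right _ _)) (pow_nonneg hρ0.le _)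
  have hsum2 : Summable (fun n => a (m + n) * ρ x ^ m) := hsum.mul_right _
  have hsum1 : Summable (fun n => a (m + n) * ρ x ^ (m + n)) := by
    refine Summable.of_nonneg_of_le hterm (fun n => ?_) hsum2
    exact mul_le_mul_of_nonneg_left
      (pow_le_pow_of_le_one hρ0.le hρ1 (Nat.le_add_right _ _)) (ha _ (Nat.le_add_right _ _))
  have hγ0 : 0 ≤ γ x := by rw [hγ]; exact tsum_nonneg hterm
  have key : γ x ≤ T * ρ x ^ m := by
    rw [hγ, hT, ← tsum_mul_right]
    refine Summable.tsum_le_tsum (fun n => ?_) hsum1 hsum2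
    exact mul_le_mul_of_nonneg_left
      (pow_le_pow_of_le_one hρ0.le hρ1 (Nat.le_add_right _ _)) (ha _ (Nat.le_add_right _ _))
  have hpow : ρ x ^ m ≤ ((c + 1) * (x ^ (2*H₀ - 2) * L x ^ 2)) ^ m :=
    pow_le_pow_left₀ hρ0.le hρub m
  have hx' : x ^ (-(2*(m:ℝ)*(1-H₀))) = (x ^ (2*H₀ - 2)) ^ m := by
    rw [← Real.rpow_natCast (x ^ (2*H₀ - 2)) m, ← Real.rpow_mul hx0.le]
    ring_nf
  have hrw : ((c + 1) * (x ^ (2*H₀ - 2) * L x ^ 2)) ^ m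
      = (c + 1) ^ m * L x ^ (2*m) * x ^ (-(2*(m:ℝ)*(1-H₀))) := by
    rw [hx', mul_pow, mul_pow, ← pow_mul, mul_comm 2 m]
    ring
  rw [abs_of_nonneg hγ0]
  calc γ x ≤ T * ρ x ^ m := key
    _ ≤ (T + 1) * (((c + 1) * (x ^ (2*H₀ - 2) * L x ^ 2)) ^ m) := by
        have h1 : T * ρ x ^ m ≤ (T + 1) * ρ x ^ m :=
          mul_le_mul_of_nonneg_right (by linarith) (pow_nonneg hρ0.le _)
        have h2 : (T + 1) * ρ x ^ m ≤ (T + 1) * (((c + 1) * (x ^ (2*H₀ - 2) * L x ^ 2)) ^ m) :=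
          mul_le_mul_of_nonneg_left hpow (by linarith)
        linarith
    _ = (T + 1) * (c + 1) ^ m * L x ^ (2*m) * x ^ (-(2*(m:ℝ)*(1-H₀))) := by
        rw [hrw]; ring
end
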